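/- The performance operator is block diagonal with respect to the projections P and P′: D = P·D·P + P′·D·P′. (Identity used in the proof of Lemma 2 of the paper.) -/
import Mathlib


open Matrix Kronecker Complex Filter
open scoped ComplexOrder

noncomputable section

/-- Outer product `v vᴴ`. -/
def outer {ι : Type*} [Fintype ι] (v : ι → ℂ) : Matrix ι ι ℂ :=
  Matrix.vecMulVec v (star v)

/-- The conjugated memory states `ψ*₀ = (e^{-inα}, e^{inα})/√2`, `ψ*₁ = (e^{inα}, e^{-inα})/√2`. -/
def psiStar (n : ℕ) (α : ℝ) (i : Fin 2) : Fin 2 → ℂ :=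
  if i = 0 then
    ((Real.sqrt 2 : ℂ))⁻¹ • ![Complex.exp (-(Complex.I * n * α)), Complex.exp (Complex.I * n * α)]
  else
    ((Real.sqrt 2 : ℂ))⁻¹ • ![Complex.exp (Complex.I * n * α), Complex.exp (-(Complex.I * n * α))]

/-- `|U⟩⟩ = (e^{iε},0,0,e^{-iε})` in `ℂ^{Fin 2 × Fin 2}`. -/
def Uket (ε : ℝ) : Fin 2 × Fin 2 → ℂ := fun p =>
  if p = (0, 0) then Complex.exp (Complex.I * ε)
  else if p = (1, 1) then Complex.exp (-(Complex.I * ε)) else 0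

/-- `|U₀⟩⟩` and `|U₁⟩⟩`. -/
def Ui (α : ℝ) (i : Fin 2) : Fin 2 × Fin 2 → ℂ :=
  if i = 0 then Uket α else Uket (-α)

/-- The performance operator `D = (1/8) ∑ᵢ (ψ*ᵢ ψ*ᵢᴴ) ⊗ₖ |Uᵢ⟩⟩⟨⟨Uᵢ|`. -/
def Dop (n : ℕ) (α : ℝ) : Matrix (Fin 2 × Fin 2 × Fin 2) (Fin 2 × Fin 2 × Fin 2) ℂ :=
  (1/8 : ℂ) • ∑ i : Fin 2, (outer (psiStar n α i)) ⊗ₖ (outer (Ui α i))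

/-- Tensor product of a vector in `ℂ²` with a vector in `ℂ^{Fin 2 × Fin 2}`. -/
def tv (v : Fin 2 → ℂ) (w : Fin 2 × Fin 2 → ℂ) : Fin 2 × Fin 2 × Fin 2 → ℂ :=
  fun p => v p.1 * w p.2

/-- `|+⟩ = (1,1)/√2`. -/
def plusV : Fin 2 → ℂ := ((Real.sqrt 2 : ℂ))⁻¹ • ![1, 1]

/-- `|−⟩ = (1,−1)/√2`. -/
def minusV : Fin 2 → ℂ := ((Real.sqrt 2 : ℂ))⁻¹ • ![1, -1]

/-- `|I⟩⟩ = (1,0,0,1)`. -/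
def Iket : Fin 2 × Fin 2 → ℂ := fun p =>
  if p = (0, 0) then 1 else if p = (1, 1) then 1 else 0

/-- `|σz⟩⟩ = (1,0,0,−1)`. -/
def Zket : Fin 2 × Fin 2 → ℂ := fun p =>
  if p = (0, 0) then 1 else if p = (1, 1) then -1 else 0

/-- `e₁ = |+⟩⊗|I⟩⟩`, `e₂ = |−⟩⊗|σz⟩⟩`. -/
def eV (i : Fin 2) : Fin 2 × Fin 2 × Fin 2 → ℂ :=
  if i = 0 then tv plusV Iket else tv minusV Zket

/-- `e₁′ = |+⟩⊗|σz⟩⟩`, `e₂′ = |−⟩⊗|I⟩⟩`. -/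
def eV' (i : Fin 2) : Fin 2 × Fin 2 × Fin 2 → ℂ :=
  if i = 0 then tv plusV Zket else tv minusV Iket

/-- The projection `P = (1/2)(e₁e₁ᴴ + e₂e₂ᴴ)`. -/
def Pproj : Matrix (Fin 2 × Fin 2 × Fin 2) (Fin 2 × Fin 2 × Fin 2) ℂ :=
  (1/2 : ℂ) • (Matrix.vecMulVec (eV 0) (star (eV 0)) + Matrix.vecMulVec (eV 1) (star (eV 1)))

/-- The projection `P′ = (1/2)(e₁′(e₁′)ᴴ + e₂′(e₂′)ᴴ)`. -/
def Pproj' : Matrix (Fin 2 × Fin 2 × Fin 2) (Fin 2 × Fin 2 × Fin 2) ℂ :=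
  (1/2 : ℂ) • (Matrix.vecMulVec (eV' 0) (star (eV' 0)) + Matrix.vecMulVec (eV' 1) (star (eV' 1)))

/-! ### Auxiliary material -/

abbrev ι8 := Fin 2 × Fin 2 × Fin 2

lemma matmul_vv (M : Matrix ι8 ι8 ℂ) (u w : ι8 → ℂ) :
    M * Matrix.vecMulVec u w = Matrix.vecMulVec (M.mulVec u) w := by
  ext i j
  simp [Matrix.mul_apply, Matrix.vecMulVec_apply, Matrix.mulVec, dotProduct,
    Finset.sum_mul, mul_assoc]

lemma vv_matmul (M : Matrix ι8 ι8 ℂ) (u w : ι8 → ℂ) :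
    Matrix.vecMulVec u w * M = Matrix.vecMulVec u (Matrix.vecMul w M) := by
  ext i j
  simp [Matrix.mul_apply, Matrix.vecMulVec_apply, Matrix.vecMul, dotProduct,
    Finset.mul_sum, mul_assoc]

lemma vv_mulVec (u w f : ι8 → ℂ) :
    (Matrix.vecMulVec u w).mulVec f = (w ⬝ᵥ f) • u := by
  ext i
  simp [Matrix.mulVec, Matrix.vecMulVec_apply, dotProduct, Finset.mul_sum,
    Finset.sum_mul, mul_assoc, mul_comm, mul_left_comm]

lemma vv_vecMul (u w f : ι8 → ℂ) :
    Matrix.vecMul f (Matrix.vecMulVec u w) = (f ⬝ᵥ u) • w := by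
  ext i
  simp [Matrix.vecMul, Matrix.vecMulVec_apply, dotProduct, Finset.mul_sum,
    Finset.sum_mul, mul_assoc, mul_comm, mul_left_comm]

lemma sq2 : ((Real.sqrt 2 : ℂ))⁻¹ * ((Real.sqrt 2 : ℂ))⁻¹ = 2⁻¹ := by
  rw [← mul_inv, ← Complex.ofReal_mul, Real.mul_self_sqrt (by norm_num)]
  norm_num

lemma dAA (i j : Fin 2) : star (eV i) ⬝ᵥ eV j = if i = j then 2 else 0 := by
  fin_cases i <;> fin_cases j <;>
    simp [dotProduct, Fintype.sum_prod_type, Fin.sum_univ_two, eV, eV', tv,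
      plusV, minusV, Iket, Zket, Prod.ext_iff, sq2] <;> norm_num

lemma dAB (i j : Fin 2) : star (eV i) ⬝ᵥ eV' j = 0 := by
  fin_cases i <;> fin_cases j <;>
    simp [dotProduct, Fintype.sum_prod_type, Fin.sum_univ_two, eV, eV', tv,
      plusV, minusV, Iket, Zket, Prod.ext_iff, sq2] <;> norm_num

lemma dBA (i j : Fin 2) : star (eV' i) ⬝ᵥ eV j = 0 := by
  fin_cases i <;> fin_cases j <;>
    simp [dotProduct, Fintype.sum_prod_type, Fin.sum_univ_two, eV, eV', tv,
      plusV, minusV, Iket, Zket, Prod.ext_iff, sq2] <;> norm_num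

lemma dBB (i j : Fin 2) : star (eV' i) ⬝ᵥ eV' j = if i = j then 2 else 0 := by
  fin_cases i <;> fin_cases j <;>
    simp [dotProduct, Fintype.sum_prod_type, Fin.sum_univ_two, eV, eV', tv,
      plusV, minusV, Iket, Zket, Prod.ext_iff, sq2] <;> norm_num

/-! ### Coefficients of the memory vectors in the `e` basis -/

def xx (α : ℝ) : ℂ := Complex.exp (Complex.I * α)
def xx' (α : ℝ) : ℂ := Complex.exp (-(Complex.I * α))
def yy (n : ℕ) (α : ℝ) : ℂ := Complex.exp (Complex.I * n * α)
def yy' (n : ℕ) (α : ℝ) : ℂ := Complex.exp (-(Complex.I * n * α))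
def ca (n : ℕ) (α : ℝ) : ℂ := (xx α + xx' α) * (yy n α + yy' n α) / 4
def cb (n : ℕ) (α : ℝ) : ℂ := -((xx α - xx' α) * (yy n α - yy' n α)) / 4
def cc (n : ℕ) (α : ℝ) : ℂ := (xx α - xx' α) * (yy n α + yy' n α) / 4
def cd (n : ℕ) (α : ℝ) : ℂ := (xx α + xx' α) * (yy' n α - yy n α) / 4
def uu (n : ℕ) (α : ℝ) : ι8 → ℂ := ca n α • eV 0 + cb n α • eV 1
def vv (n : ℕ) (α : ℝ) : ι8 → ℂ := cc n α • eV' 0 + cd n α • eV' 1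

lemma decomp0 (n : ℕ) (α : ℝ) : tv (psiStar n α 0) (Ui α 0) = uu n α + vv n α := by
  funext ⟨i, j, k⟩
  fin_cases i <;> fin_cases j <;> fin_cases k <;>
    simp [tv, psiStar, Ui, Uket, uu, vv, ca, cb, cc, cd, xx, xx', yy, yy',
      eV, eV', plusV, minusV, Iket, Zket, Prod.ext_iff] <;> ring

lemma decomp1 (n : ℕ) (α : ℝ) : tv (psiStar n α 1) (Ui α 1) = uu n α - vv n α := by
  funext ⟨i, j, k⟩
  fin_cases i <;> fin_cases j <;> fin_cases k <;>
    simp [tv, psiStar, Ui, Uket, uu, vv, ca, cb, cc, cd, xx, xx', yy, yy',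
      eV, eV', plusV, minusV, Iket, Zket, Prod.ext_iff, Complex.ofReal_neg,
      mul_neg] <;> ring

lemma outer_kron (a : Fin 2 → ℂ) (b : Fin 2 × Fin 2 → ℂ) :
    (outer a) ⊗ₖ (outer b) = outer (tv a b) := by
  ext ⟨i, p⟩ ⟨j, q⟩
  simp [outer, Matrix.kroneckerMap_apply, Matrix.vecMulVec_apply, tv, Pi.star_apply,
    star_mul']
  ring

lemma outer_sum_split (u v : ι8 → ℂ) :
    outer (u + v) + outer (u - v) =
      (2 : ℂ) • (Matrix.vecMulVec u (star u) + Matrix.vecMulVec v (star v)) := by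
  ext i j
  simp [outer, Matrix.vecMulVec_apply, Pi.add_apply, Pi.sub_apply, Pi.star_apply,
    star_add, star_sub]
  ring

lemma Dop_eq (n : ℕ) (α : ℝ) :
    Dop n α = (1/4 : ℂ) •
      (Matrix.vecMulVec (uu n α) (star (uu n α)) +
       Matrix.vecMulVec (vv n α) (star (vv n α))) := by
  rw [Dop, Fin.sum_univ_two, outer_kron, outer_kron, decomp0, decomp1, outer_sum_split,
    smul_smul]
  norm_num

lemma P_mulVec (f : ι8 → ℂ) :
    Pproj.mulVec f =
      ((1/2 : ℂ) * (star (eV 0) ⬝ᵥ f)) • eV 0 + ((1/2 : ℂ) * (star (eV 1) ⬝ᵥ f)) • eV 1 := by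
  rw [Pproj, Matrix.smul_mulVec, Matrix.add_mulVec, vv_mulVec, vv_mulVec]
  simp [smul_add, smul_smul]

lemma P'_mulVec (f : ι8 → ℂ) :
    Pproj'.mulVec f =
      ((1/2 : ℂ) * (star (eV' 0) ⬝ᵥ f)) • eV' 0 + ((1/2 : ℂ) * (star (eV' 1) ⬝ᵥ f)) • eV' 1 := by
  rw [Pproj', Matrix.smul_mulVec, Matrix.add_mulVec, vv_mulVec, vv_mulVec]
  simp [smul_add, smul_smul]

lemma dot_smul (c : ℂ) (a f : ι8 → ℂ) : a ⬝ᵥ (c • f) = c * (a ⬝ᵥ f) := by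
  simp [dotProduct, Finset.mul_sum, mul_assoc, mul_comm, mul_left_comm]

lemma P_mulVec_u (n : ℕ) (α : ℝ) : Pproj.mulVec (uu n α) = uu n α := by
  rw [P_mulVec, uu]
  simp only [dotProduct_add, dot_smul, dAA, dAB]
  norm_num [uu]
  ring_nf

lemma P_mulVec_v (n : ℕ) (α : ℝ) : Pproj.mulVec (vv n α) = 0 := by
  rw [P_mulVec, vv]
  simp only [dotProduct_add, dot_smul, dAB]
  simp

lemma P'_mulVec_u (n : ℕ) (α : ℝ) : Pproj'.mulVec (uu n α) = 0 := by
  rw [P'_mulVec, uu]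
  simp only [dotProduct_add, dot_smul, dBA]
  simp

lemma P'_mulVec_v (n : ℕ) (α : ℝ) : Pproj'.mulVec (vv n α) = vv n α := by
  rw [P'_mulVec, vv]
  simp only [dotProduct_add, dot_smul, dBB, dBA]
  norm_num [vv]
  ring_nf

lemma vv_star_conjTranspose (u : ι8 → ℂ) :
    (Matrix.vecMulVec u (star u))ᴴ = Matrix.vecMulVec u (star u) := by
  ext i j
  simp [Matrix.conjTranspose_apply, Matrix.vecMulVec_apply, Pi.star_apply, mul_comm]

lemma P_herm : Pprojᴴ = Pproj := by
  rw [Pproj, Matrix.conjTranspose_smul, Matrix.conjTranspose_add,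
    vv_star_conjTranspose, vv_star_conjTranspose]
  norm_num

lemma P'_herm : Pproj'ᴴ = Pproj' := by
  rw [Pproj', Matrix.conjTranspose_smul, Matrix.conjTranspose_add,
    vv_star_conjTranspose, vv_star_conjTranspose]
  norm_num

lemma vecMul_star (M : Matrix ι8 ι8 ℂ) (hM : Mᴴ = M) (u : ι8 → ℂ) :
    Matrix.vecMul (star u) M = star (M.mulVec u) := by
  rw [Matrix.star_mulVec, hM]

lemma sandwich (M : Matrix ι8 ι8 ℂ) (hM : Mᴴ = M) (u : ι8 → ℂ) (w : ι8 → ℂ)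
    (hw : M.mulVec u = w) :
    M * Matrix.vecMulVec u (star u) * M = Matrix.vecMulVec w (star w) := by
  rw [matmul_vv, vv_matmul, vecMul_star M hM, hw]

lemma vv_zero : Matrix.vecMulVec (0 : ι8 → ℂ) (star (0 : ι8 → ℂ)) = 0 := by
  ext i j; simp [Matrix.vecMulVec_apply]

theorem performance_operator_block_diagonal (n : ℕ) (hn : 1 ≤ n) (α : ℝ) (hα : 0 < α)
    (hdist : 4 * n * α < Real.pi) :
    Dop n α = Pproj * Dop n α * Pproj + Pproj' * Dop n α * Pproj' := by
  rw [Dop_eq]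
  rw [Matrix.mul_smul, Matrix.smul_mul, Matrix.mul_smul, Matrix.smul_mul, ← smul_add]
  congr 1
  rw [mul_add, add_mul, mul_add, add_mul,
    sandwich Pproj P_herm _ _ (P_mulVec_u n α),
    sandwich Pproj P_herm _ _ (P_mulVec_v n α),
    sandwich Pproj' P'_herm _ _ (P'_mulVec_u n α),
    sandwich Pproj' P'_herm _ _ (P'_mulVec_v n α),
    vv_zero]
  abel

end
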